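/- For an odd prime p and any integer α with 1 ≤ α ≤ (p-1)/2, the sum ∑_{i=1}^{(p-1)/2} P(⟨αi/p⟩) equals (p²-1)/(12p), where P(x) = x(1-x) and ⟨x⟩ denotes the fractional part of x. -/

import Mathlib

/-- `P x = x(1-x)` -/
noncomputable def Ptor (x : ℝ) : ℝ := x * (1 - x)

lemma sum_id_real (n : ℕ) : 2 * ∑ i ∈ Finset.range n, (i : ℝ) = n * (n - 1) := by
  induction n with
  | zero => simp
  | succ k ih =>
    rw [Finset.sum_range_succ, mul_add, ih]
    push_cast
    ring

lemma sum_sq_real (n : ℕ) :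
    6 * ∑ i ∈ Finset.range n, (i : ℝ) ^ 2 = n * (n - 1) * (2 * n - 1) := by
  induction n with
  | zero => simp
  | succ k ih =>
    rw [Finset.sum_range_succ, mul_add, ih]
    push_cast
    ring

theorem sum_P_fract (p : ℕ) (hp : p.Prime) (hodd : Odd p)
    (α : ℕ) (h1 : 1 ≤ α) (h2 : α ≤ (p - 1) / 2) :
    ∑ i ∈ Finset.Icc 1 ((p - 1) / 2), Ptor (Int.fract ((α * i : ℝ) / p))
      = ((p : ℝ) ^ 2 - 1) / (12 * p) := by
  obtain ⟨k, hk⟩ := hodd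
  set m := (p - 1) / 2 with hm
  have hp2 : p ≠ 2 := by rintro rfl; omega
  have hp3 : 3 ≤ p := by
    have := hp.two_le; omega
  have hpm : p = 2 * m + 1 := by omega
  have hp0 : 0 < p := by omega
  have hpR : (0:ℝ) < p := by exact_mod_cast hp0
  have hαp : ¬ p ∣ α := by
    intro h
    have := Nat.le_of_dvd (by omega) h
    omega
  set r : ℕ → ℕ := fun i => (α * i) % p with hr
  set g : ℕ → ℕ := fun i => min (r i) (p - r i) with hg
  have hrlt : ∀ i, r i < p := fun i => Nat.mod_lt _ hp0
  have hrpos : ∀ i ∈ Finset.Icc 1 m, 1 ≤ r i := by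
    intro i hi
    simp only [Finset.mem_Icc] at hi
    rcases Nat.eq_zero_or_pos (r i) with h0 | h0
    · exfalso
      have hdvd : p ∣ α * i := Nat.dvd_iff_mod_eq_zero.mpr h0
      rcases (hp.dvd_mul).mp hdvd with h | h
      · exact hαp h
      · have := Nat.le_of_dvd (by omega) h; omega
    · exact h0
  have hgmem : ∀ i ∈ Finset.Icc 1 m, g i ∈ Finset.Icc 1 m := by
    intro i hi
    have h0 := hrpos i hi
    have h1 := hrlt i
    simp only [Finset.mem_Icc]
    constructor
    · simp only [hg]; omega
    · simp only [hg]; omega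
  have hinj : Set.InjOn g (Finset.Icc 1 m) := by
    intro i hi j hj hij
    simp only [Finset.coe_Icc, Set.mem_Icc] at hi hj
    have hri := hrlt i
    have hrj := hrlt j
    have hri1 : 1 ≤ r i := hrpos i (Finset.mem_Icc.mpr hi)
    have hrj1 : 1 ≤ r j := hrpos j (Finset.mem_Icc.mpr hj)
    have hcase : r i = r j ∨ r i + r j = p := by
      simp only [hg] at hij; omega
    rcases hcase with hcase | hcase
    · -- α i ≡ α j mod p
      have hmod : α * i ≡ α * j [MOD p] := hcase
      have hcop : p.gcd α = 1 := (Nat.coprime_iff_gcd_eq_one).mp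
        (hp.coprime_iff_not_dvd.mpr hαp)
      have := (Nat.ModEq.cancel_left_of_coprime hcop hmod)
      have hij2 : i % p = j % p := this
      rwa [Nat.mod_eq_of_lt (by omega), Nat.mod_eq_of_lt (by omega)] at hij2
    · exfalso
      have hdvd : p ∣ α * (i + j) := by
        have : (α * (i + j)) % p = 0 := by
          rw [Nat.mul_add, Nat.add_mod]
          show (r i + r j) % p = 0
          rw [hcase, Nat.mod_self]
        exact Nat.dvd_iff_mod_eq_zero.mpr this
      rcases (hp.dvd_mul).mp hdvd with h | h
      · exact hαp h
      · have := Nat.le_of_dvd (by omega) h; omega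
  have hsurj : Set.SurjOn g (Finset.Icc 1 m) (Finset.Icc 1 m) := by
    have key := Finset.surj_on_of_inj_on_of_card_le
      (s := Finset.Icc 1 m) (t := Finset.Icc 1 m)
      (fun a _ => g a) (fun a ha => hgmem a ha)
      (fun a₁ a₂ ha₁ ha₂ h => hinj (by simpa using ha₁) (by simpa using ha₂) h)
      le_rfl
    intro b hb
    simp only [Finset.coe_Icc, Set.mem_Icc] at hb
    obtain ⟨a, ha, hab⟩ := key b (Finset.mem_Icc.mpr hb)
    exact ⟨a, by simpa using ha, hab.symm⟩
  have hterm : ∀ i ∈ Finset.Icc 1 m,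
      Ptor (Int.fract ((α * i : ℝ) / p)) = Ptor ((g i : ℝ) / p) := by
    intro i hi
    have hfr : Int.fract ((α * i : ℝ) / p) = (r i : ℝ) / p := by
      have hdm : α * i = p * ((α * i) / p) + r i := (Nat.div_add_mod _ _).symm
      have hcast0 : ((α * i : ℕ) : ℝ) = p * ((α * i / p : ℕ) : ℝ) + r i := by
        exact_mod_cast hdm
      have : ((α * i : ℕ) : ℝ) / p = (r i : ℝ) / p + ((α * i) / p : ℕ) := by
        rw [hcast0]
        field_simp
        ring
      rw [show ((α : ℝ) * i) / p = ((α * i : ℕ) : ℝ) / p by push_cast; ring, this,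
        Int.fract_add_natCast]
      refine Int.fract_eq_self.mpr ⟨by positivity, ?_⟩
      rw [div_lt_one hpR]
      exact_mod_cast hrlt i
    rw [hfr]
    have hrle : r i < p := hrlt i
    rcases le_total (r i) (p - r i) with h | h
    · have : g i = r i := by simp only [hg]; omega
      rw [this]
    · have hgi : g i = p - r i := by simp only [hg]; omega
      rw [hgi]
      have hcast : ((p - r i : ℕ) : ℝ) = (p : ℝ) - r i := by
        push_cast [Nat.cast_sub (le_of_lt hrle)]; ring
      rw [hcast]
      simp only [Ptor]
      field_simp
      ring
  have hbij : ∑ x ∈ Finset.Icc 1 m, Ptor ((g x : ℝ) / p)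
      = ∑ x ∈ Finset.Icc 1 m, Ptor ((x : ℝ) / p) :=
    Finset.sum_nbij g hgmem hinj hsurj (fun a _ => rfl)
  rw [Finset.sum_congr rfl hterm, hbij]
  -- now compute ∑ i ∈ Icc 1 m, Ptor (i/p)
  have hins : Finset.range (m + 1) = insert 0 (Finset.Icc 1 m) := by
    ext x; simp [Finset.mem_range, Finset.mem_Icc]; omega
  have h0 : Ptor ((0 : ℕ) : ℝ) = 0 := by simp [Ptor]
  have hsum : ∑ i ∈ Finset.Icc 1 m, Ptor ((i : ℝ) / p)
      = ∑ i ∈ Finset.range (m + 1), Ptor ((i : ℝ) / p) := by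
    rw [hins, Finset.sum_insert (by simp)]
    simp [Ptor]
  rw [hsum]
  have hexp : ∀ i : ℕ, Ptor ((i : ℝ) / p) = (i : ℝ) / p - (i : ℝ) ^ 2 / p ^ 2 := by
    intro i; simp only [Ptor]; field_simp
  simp only [hexp]
  rw [Finset.sum_sub_distrib, ← Finset.sum_div, ← Finset.sum_div]
  have e1 := sum_id_real (m + 1)
  have e2 := sum_sq_real (m + 1)
  have hmR : (p : ℝ) = 2 * m + 1 := by exact_mod_cast congrArg (Nat.cast : ℕ → ℝ) hpm
  have hS1 : ∑ i ∈ Finset.range (m + 1), (i : ℝ) = (m + 1) * m / 2 := by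
    push_cast at e1; linarith
  have hS2 : ∑ i ∈ Finset.range (m + 1), (i : ℝ) ^ 2
      = (m + 1) * m * (2 * m + 1) / 6 := by
    push_cast at e2; linarith
  rw [hS1, hS2, hmR]
  have hm0 : (0:ℝ) < 2 * (m:ℝ) + 1 := by positivity
  field_simp
  ring
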